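/- In the bandit social learning model with two arms, suppose every agent t has index Ind_{a,t} ∈ [max(0, μ̂_{a,t} − sqrt(η/n_{a,t})), min(1, μ̂_{a,t} + sqrt(η/n_{a,t}))] for each arm a, where n_{a,t} is the number of samples of arm a in the history and μ̂_{a,t} the empirical mean, and each agent chooses an arm with largest index. Fix thresholds q₁ < q₂ with q₂ − q₁ > 2·sqrt(η/N₀), where N₀ is the number of initial samples per arm. If the average of the first N₀ tape rewards of arm 1 is at most q₁, and for every n ∈ [T] the average of the first n tape rewards of arm 2 is at least q₂, then no agent ever chooses arm 1. -/

import Mathlib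

/-- Number of samples of `arm` available to agent `t` (initial `N₀` samples
plus the pulls by agents in rounds `0,…,t−1`). -/
def numSamples (a : ℕ → Fin 2) (N₀ t : ℕ) (arm : Fin 2) : ℕ :=
  N₀ + ((Finset.range t).filter fun s => a s = arm).card

/-- Average of the first `n` tape rewards of `arm`. -/
noncomputable def tapeAvg (tape : Fin 2 → ℕ → ℝ) (arm : Fin 2) (n : ℕ) : ℝ :=
  (∑ i ∈ Finset.range n, tape arm i) / n

/-- Arm `0` is the good arm (arm 1 of the paper), arm `1` is the bad arm
(arm 2 of the paper). `Ind t arm` is the index of `arm` for agent `t`;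
`a t` is the arm chosen in round `t` (an arm of largest index). -/
theorem stmt_17 (T N₀ : ℕ) (hN₀ : 1 ≤ N₀) (η : ℝ) (hη : 0 ≤ η)
    (tape : Fin 2 → ℕ → ℝ) (a : ℕ → Fin 2) (Ind : ℕ → Fin 2 → ℝ)
    (hConf : ∀ t < T, ∀ arm : Fin 2,
      Ind t arm ∈ Set.Icc
        (max 0 (tapeAvg tape arm (numSamples a N₀ t arm) -
          Real.sqrt (η / (numSamples a N₀ t arm))))
        (min 1 (tapeAvg tape arm (numSamples a N₀ t arm) +
          Real.sqrt (η / (numSamples a N₀ t arm)))))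
    (hChoice : ∀ t < T, ∀ arm : Fin 2, Ind t arm ≤ Ind t (a t))
    (q₁ q₂ : ℝ) (hq : q₁ < q₂) (hGap : 2 * Real.sqrt (η / N₀) < q₂ - q₁)
    (hArm1 : tapeAvg tape 0 N₀ ≤ q₁)
    (hArm2 : ∀ n : ℕ, 1 ≤ n → n ≤ N₀ + T → q₂ ≤ tapeAvg tape 1 n) :
    ∀ t < T, a t ≠ 0 := by
  have htwo : ∀ x : Fin 2, x ≠ 0 → x = 1 := by decide
  intro t
  induction t using Nat.strong_induction_on with
  | _ t ih =>
    intro htT hat0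
    have hprev : ∀ s < t, a s = 1 := fun s hst =>
      htwo _ (ih s hst (hst.trans htT))
    have hn0 : numSamples a N₀ t 0 = N₀ := by
      unfold numSamples
      have : (Finset.range t).filter (fun s => a s = (0 : Fin 2)) = ∅ := by
        apply Finset.filter_false_of_mem
        intro s hs
        simp only [Finset.mem_range] at hs
        rw [hprev s hs]; decide
      rw [this]; simp
    have hn1 : numSamples a N₀ t 1 = N₀ + t := by
      unfold numSamples
      have : (Finset.range t).filter (fun s => a s = (1 : Fin 2)) = Finset.range t := by
        apply Finset.filter_true_of_mem
        intro s hs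
        exact hprev s (Finset.mem_range.mp hs)
      rw [this, Finset.card_range]
    have hC0 := hConf t htT 0
    have hC1 := hConf t htT 1
    rw [hn0] at hC0
    rw [hn1] at hC1
    have hsq : Real.sqrt (η / (N₀ + t : ℕ)) ≤ Real.sqrt (η / N₀) := by
      apply Real.sqrt_le_sqrt
      apply div_le_div_of_nonneg_left hη
      · exact_mod_cast hN₀
      · exact_mod_cast Nat.le_add_right N₀ t
    have h0le : Ind t 0 ≤ q₁ + Real.sqrt (η / N₀) := by
      calc Ind t 0 ≤ min 1 (tapeAvg tape 0 N₀ + Real.sqrt (η / N₀)) := hC0.2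
        _ ≤ tapeAvg tape 0 N₀ + Real.sqrt (η / N₀) := min_le_right _ _
        _ ≤ q₁ + Real.sqrt (η / N₀) := by linarith
    have h1ge : q₂ - Real.sqrt (η / N₀) ≤ Ind t 1 := by
      have havg : q₂ ≤ tapeAvg tape 1 (N₀ + t) := by
        apply hArm2 <;> omega
      calc q₂ - Real.sqrt (η / N₀)
          ≤ tapeAvg tape 1 (N₀ + t) - Real.sqrt (η / (N₀ + t : ℕ)) := by linarith
        _ ≤ max 0 (tapeAvg tape 1 (N₀ + t) - Real.sqrt (η / (N₀ + t : ℕ))) := le_max_right _ _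
        _ ≤ Ind t 1 := hC1.1
    have hch := hChoice t htT 1
    rw [hat0] at hch
    linarith
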